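/- arXiv:1304.7169 — 6 statements merged into one kernel-verified Lean document; each statement's English description precedes it below -/
import Mathlib

section
/- For an odd prime p, positive integers j, m, n, and an integer h with 1 ≤ h ≤ 2^{m-1}·p^{n-1}, one has x^{j·2^{m-1}·p^n - h} ≡ Σ_{a=0}^{p-2} (-1)^{a+j} x^{(a+1)·2^{m-1}·p^{n-1} - h} (mod Φ_{2^m p^n}(x)) in Q[x]. -/
open Polynomial

theorem pow_sub_congr (p j m n h : ℕ) (hp : p.Prime) (hodd : p ≠ 2)
    (hj : 1 ≤ j) (hm : 1 ≤ m) (hn : 1 ≤ n)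
    (h1 : 1 ≤ h) (h2 : h ≤ 2 ^ (m - 1) * p ^ (n - 1)) :
    cyclotomic (2 ^ m * p ^ n) ℚ ∣
      (X : ℚ[X]) ^ (j * 2 ^ (m - 1) * p ^ n - h) -
        ∑ a ∈ Finset.range (p - 1),
          (-1 : ℚ[X]) ^ (a + j) * X ^ ((a + 1) * 2 ^ (m - 1) * p ^ (n - 1) - h) := by
  obtain ⟨m, rfl⟩ : ∃ k, m = k + 1 := ⟨m - 1, by omega⟩
  obtain ⟨n, rfl⟩ : ∃ k, n = k + 1 := ⟨n - 1, by omega⟩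
  simp only [Nat.add_sub_cancel] at h2 ⊢
  set q : ℕ := 2 ^ m * p ^ n with hqdef
  have hp3 : 3 ≤ p := by have := hp.two_le; omega
  have hppos : 0 < p := by omega
  have hqpos : 0 < q := by positivity
  have hN0 : 2 ^ (m + 1) * p ^ (n + 1) ≠ 0 := by positivity
  have hNeq : 2 ^ (m + 1) * p ^ (n + 1) = 2 * (q * p) := by rw [hqdef]; ring
  obtain ⟨ζ, hζ⟩ : ∃ ζ : ℂ, IsPrimitiveRoot ζ (2 ^ (m + 1) * p ^ (n + 1)) :=
    ⟨_, Complex.isPrimitiveRoot_exp _ hN0⟩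
  rw [cyclotomic_eq_minpoly_rat hζ (Nat.pos_of_ne_zero hN0)]
  apply minpoly.dvd
  simp only [map_sub, map_pow, map_sum, map_mul, aeval_X, map_neg, map_one]
  have hζ0 : ζ ≠ 0 := hζ.ne_zero hN0
  have hZN : ζ ^ (2 ^ (m + 1) * p ^ (n + 1)) = 1 := hζ.pow_eq_one
  have hqppos : 0 < q * p := Nat.mul_pos hqpos hppos
  have hhalf : ζ ^ (q * p) = -1 := by
    have hsq : (ζ ^ (q * p)) ^ 2 = 1 := by
      rw [← pow_mul, mul_comm, ← hNeq]; exact hZN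
    have hne1 : ζ ^ (q * p) ≠ 1 :=
      hζ.pow_ne_one_of_pos_of_lt hqppos.ne' (by rw [hNeq]; omega)
    have hfac : (ζ ^ (q * p) - 1) * (ζ ^ (q * p) + 1) = 0 := by linear_combination hsq
    rcases mul_eq_zero.mp hfac with h' | h'
    · exact absurd (sub_eq_zero.mp h') hne1
    · exact eq_neg_of_add_eq_zero_left h'
  set η : ℂ := -ζ ^ q with hηdef
  have hηp : η ^ p = 1 := by
    rw [hηdef, neg_pow, (hp.odd_of_ne_two hodd).neg_one_pow, ← pow_mul, hhalf]; ring
  have hηne1 : η ≠ 1 := by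
    intro H
    have hzq : ζ ^ q = -1 := by rw [hηdef] at H; linear_combination -H
    have hz2q : ζ ^ (q * 2) = 1 := by rw [pow_mul, hzq]; ring
    exact hζ.pow_ne_one_of_pos_of_lt (by omega) (by rw [hNeq]; nlinarith) hz2q
  have hgeom : ∑ a ∈ Finset.range p, η ^ a = 0 := by
    have hg := geom_sum_mul η p
    rw [hηp, sub_self] at hg
    rcases mul_eq_zero.mp hg with h' | h'
    · exact h'
    · exact absurd (sub_eq_zero.mp h') hηne1
  have hsum' : ∑ a ∈ Finset.range (p - 1), η ^ a = -η ^ (p - 1) := by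
    have h3 : ∑ a ∈ Finset.range ((p - 1) + 1), η ^ a
        = (∑ a ∈ Finset.range (p - 1), η ^ a) + η ^ (p - 1) := Finset.sum_range_succ _ _
    rw [show p - 1 + 1 = p from by omega] at h3
    linear_combination hgeom - h3
  have hE1 : j * 2 ^ m * p ^ (n + 1) = j * (q * p) := by rw [hqdef]; ring
  have hle1 : h ≤ j * (q * p) := le_trans h2 (by nlinarith)
  have hE2 : ∀ a : ℕ, (a + 1) * 2 ^ m * p ^ n = (a + 1) * q := fun a => by rw [hqdef]; ring
  have hle2 : ∀ a : ℕ, h ≤ (a + 1) * q := fun a => le_trans h2 (by nlinarith)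
  rw [sub_eq_zero]
  have hmain : ζ ^ h * ζ ^ (j * 2 ^ m * p ^ (n + 1) - h) =
      ζ ^ h * ∑ a ∈ Finset.range (p - 1),
        (-1 : ℂ) ^ (a + j) * ζ ^ ((a + 1) * 2 ^ m * p ^ n - h) := by
    rw [← pow_add, hE1, Nat.add_sub_cancel' hle1, Finset.mul_sum]
    have hterm : ∀ a ∈ Finset.range (p - 1),
        ζ ^ h * ((-1 : ℂ) ^ (a + j) * ζ ^ ((a + 1) * 2 ^ m * p ^ n - h)) =
        (-1 : ℂ) ^ j * (η ^ a * ζ ^ q) := by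
      intro a _
      have e1 : ζ ^ h * ((-1 : ℂ) ^ (a + j) * ζ ^ ((a + 1) * 2 ^ m * p ^ n - h))
          = (-1 : ℂ) ^ (a + j) * (ζ ^ q) ^ (a + 1) := by
        rw [hE2 a, mul_left_comm, ← pow_add, Nat.add_sub_cancel' (hle2 a), ← pow_mul, mul_comm q]
      rw [e1, hηdef, pow_add, neg_pow]
      ring
    rw [Finset.sum_congr rfl hterm]
    have e2 : ζ ^ (j * (q * p)) = (-1 : ℂ) ^ j := by rw [mul_comm, pow_mul, hhalf]
    have e3 : η ^ (p - 1) * ζ ^ q = -1 := by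
      have hev : Even (p - 1) := by
        rcases hp.odd_of_ne_two hodd with ⟨k, hk⟩; exact ⟨k, by omega⟩
      rw [hηdef, hev.neg_pow, ← pow_succ, show p - 1 + 1 = p from by omega, ← pow_mul, hhalf]
    rw [e2, ← Finset.mul_sum, ← Finset.sum_mul, hsum', neg_mul, e3]
    ring
  exact mul_left_cancel₀ (pow_ne_zero h hζ0) hmain
end

section
/- Let p be a prime with p ≡ 1 (mod 4) and p > 5. Then there exists an integer a with 3(p-1)/4 - 1 ≤ a ≤ p - 2 such that 2a+1 is a quadratic non-residue modulo p, i.e., the Legendre symbol ((2a+1)/p) = -1. -/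
theorem exists_nonresidue (p : ℕ) [Fact p.Prime] (hp1 : p % 4 = 1) (hp5 : 5 < p) :
    ∃ a : ℤ, 3 * ((p : ℤ) - 1) / 4 - 1 ≤ a ∧ a ≤ (p : ℤ) - 2 ∧
      legendreSym p (2 * a + 1) = -1 := by
  by_contra hcon
  push_neg at hcon
  obtain ⟨k, hk⟩ : ∃ k : ℕ, p = 4 * k + 1 := ⟨p / 4, by omega⟩
  have hk2 : 2 ≤ k := by omega
  have hpprime := Fact.out (p := p.Prime)
  have hchar : ringChar (ZMod p) ≠ 2 := by
    rw [ZMod.ringChar_zmod_n]; omega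
  set χ := quadraticChar (ZMod p) with hχ
  -- cast of naturals < p is nonzero
  have hnz : ∀ m : ℕ, 0 < m → m < p → (m : ZMod p) ≠ 0 := by
    intro m h1 h2 h0
    rw [ZMod.natCast_eq_zero_iff] at h0
    exact absurd (Nat.le_of_dvd h1 h0) (by omega)
  have h2nz : (2 : ZMod p) ≠ 0 := by
    have := hnz 2 (by norm_num) (by omega)
    simpa using this
  -- χ(-1) = 1
  have hneg1 : χ (-1) = 1 := by
    rw [hχ, quadraticChar_one_iff_isSquare (neg_ne_zero.mpr one_ne_zero)]
    exact ZMod.exists_sq_eq_neg_one_iff.mpr (by omega)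
  -- key: χ y = χ 2 for y in [k-1, 2k-1]
  have key : ∀ y : ℕ, k - 1 ≤ y → y ≤ 2 * k - 1 → χ ((y : ℕ) : ZMod p) = χ 2 := by
    intro y h1 h2
    have ha := hcon ((y : ℤ) + 2 * k) (by push_cast [hk]; omega) (by push_cast [hk]; omega)
    have hcast : ((2 * ((y : ℤ) + 2 * k) + 1 : ℤ) : ZMod p) = ((2 * y : ℕ) : ZMod p) := by
      have : (2 * ((y : ℤ) + 2 * k) + 1 : ℤ) = (2 * y : ℕ) + (p : ℤ) := by push_cast; omega
      rw [this]; push_cast [ZMod.natCast_self]; ring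
    have hLS : legendreSym p (2 * ((y : ℤ) + 2 * k) + 1) = χ ((2 * y : ℕ) : ZMod p) := by
      rw [legendreSym, hcast]
    have h2ynz : ((2 * y : ℕ) : ZMod p) ≠ 0 := hnz _ (by omega) (by omega)
    have hone : χ ((2 * y : ℕ) : ZMod p) = 1 := by
      rcases quadraticChar_dichotomy h2ynz with h | h
      · exact h
      · exact absurd (hLS.trans h) ha
    have hmul : χ ((2 * y : ℕ) : ZMod p) = χ 2 * χ ((y : ℕ) : ZMod p) := by
      rw [show ((2 * y : ℕ) : ZMod p) = 2 * ((y : ℕ) : ZMod p) by push_cast; ring, map_mul]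
    have hynz : ((y : ℕ) : ZMod p) ≠ 0 := hnz _ (by omega) (by omega)
    rcases quadraticChar_dichotomy h2nz with h | h <;>
      rcases quadraticChar_dichotomy hynz with h' | h' <;>
      rw [hmul, h, h'] at hone <;>
      first
        | (exact h'.trans h.symm)
        | (norm_num at hone)
  -- the finset
  set S : Finset ℕ := Finset.Icc (k - 1) (2 * k - 1) with hS
  set T : Finset (ZMod p) :=
    S.image (fun y : ℕ => (y : ZMod p)) ∪ S.image (fun y : ℕ => -(y : ZMod p)) with hT
  have hinj : ∀ y₁ ∈ S, ∀ y₂ ∈ S, (y₁ : ZMod p) = (y₂ : ZMod p) → y₁ = y₂ := by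
    intro y₁ hy₁ y₂ hy₂ h
    simp only [hS, Finset.mem_Icc] at hy₁ hy₂
    have := congrArg ZMod.val h
    rwa [ZMod.val_cast_of_lt (by omega), ZMod.val_cast_of_lt (by omega)] at this
  have hdisj : Disjoint (S.image (fun y : ℕ => (y : ZMod p)))
      (S.image (fun y : ℕ => -(y : ZMod p))) := by
    rw [Finset.disjoint_left]
    rintro x hx hx'
    simp only [Finset.mem_image] at hx hx'
    obtain ⟨y₁, hy₁, rfl⟩ := hx
    obtain ⟨y₂, hy₂, he⟩ := hx'
    have : ((y₁ + y₂ : ℕ) : ZMod p) = 0 := by push_cast; rw [← he]; ring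
    simp only [hS, Finset.mem_Icc] at hy₁ hy₂
    exact hnz (y₁ + y₂) (by omega) (by omega) this
  have hcardS : S.card = k + 1 := by rw [hS, Nat.card_Icc]; omega
  have hcardT : T.card = 2 * (k + 1) := by
    rw [hT, Finset.card_union_of_disjoint hdisj,
      Finset.card_image_of_injOn hinj,
      Finset.card_image_of_injOn (fun y₁ hy₁ y₂ hy₂ h => hinj y₁ hy₁ y₂ hy₂ (by
        have := neg_injective h; exact this)), hcardS]
    omega
  -- χ is constant = χ 2 on T
  have hconst : ∀ x ∈ T, χ x = χ 2 := by
    intro x hx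
    simp only [hT, Finset.mem_union, Finset.mem_image] at hx
    rcases hx with ⟨y, hy, rfl⟩ | ⟨y, hy, rfl⟩
    · simp only [hS, Finset.mem_Icc] at hy
      exact key y hy.1 hy.2
    · simp only [hS, Finset.mem_Icc] at hy
      rw [show -((y : ℕ) : ZMod p) = (-1) * ((y : ℕ) : ZMod p) by ring, map_mul, hneg1,
        one_mul]
      exact key y hy.1 hy.2
  -- sum argument
  have hsum : ∑ x : ZMod p, χ x = 0 := quadraticChar_sum_zero hchar
  have hsplit : ∑ x : ZMod p, χ x =
      ∑ x ∈ T, χ x + ∑ x ∈ Finset.univ \ T, χ x := by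
    rw [← Finset.sum_sdiff (Finset.subset_univ T)]; ring
  have hsumT : ∑ x ∈ T, χ x = (T.card : ℤ) * χ 2 := by
    rw [Finset.sum_congr rfl hconst, Finset.sum_const, nsmul_eq_mul]
  have hbound : |∑ x ∈ Finset.univ \ T, χ x| ≤ ((Finset.univ \ T).card : ℤ) := by
    calc |∑ x ∈ Finset.univ \ T, χ x| ≤ ∑ x ∈ Finset.univ \ T, |χ x| :=
          Finset.abs_sum_le_sum_abs _ _
      _ ≤ ∑ _x ∈ Finset.univ \ T, (1 : ℤ) := by
          apply Finset.sum_le_sum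
          intro x _
          by_cases hx : x = 0
          · simp [hx, hχ]
          · rcases quadraticChar_dichotomy (F := ZMod p) hx with h | h <;>
              rw [hχ, h] <;> norm_num
      _ = ((Finset.univ \ T).card : ℤ) := by rw [Finset.sum_const]; simp
  have hcardC : (Finset.univ \ T).card = p - 2 * (k + 1) := by
    rw [Finset.card_sdiff_of_subset (Finset.subset_univ T), hcardT, Finset.card_univ, ZMod.card]
  have hχ2 : χ 2 = 1 ∨ χ 2 = -1 := quadraticChar_dichotomy h2nz
  rw [hsplit, hsumT] at hsum
  have habs : |∑ x ∈ Finset.univ \ T, χ x| = (T.card : ℤ) := by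
    have : ∑ x ∈ Finset.univ \ T, χ x = -((T.card : ℤ) * χ 2) := by linarith
    rw [this, abs_neg, abs_mul]
    rcases hχ2 with h | h <;> rw [h] <;> simp
  rw [habs, hcardC, hcardT] at hbound
  have : ((p : ℤ)) = 4 * k + 1 := by exact_mod_cast congrArg Nat.cast hk
  omega
end

section
/- Let t(x) = 6x² + 1, r(x) = 36x⁴ + 36x³ + 18x² + 6x + 1, and q(x) = 36x⁴ + 36x³ + 24x² + 6x + 1 in Z[x]. Then r(x) divides q(x) + 1 - t(x), r(x) divides Φ_12(t(x) - 1), and 4·q(x) - t(x)² = 3·(6x² + 4x + 1)². -/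
open Polynomial

lemma cyclotomic_6_int : cyclotomic 6 ℤ = X ^ 2 - X + 1 := by
  have h := cyclotomic_expand_eq_cyclotomic_mul (p := 2) (n := 3) Nat.prime_two
    (by norm_num) ℤ
  have h3 : cyclotomic 3 ℤ = X ^ 2 + X + 1 := by
    simp [cyclotomic_prime, Finset.sum_range_succ]; ring
  rw [h3] at h
  have hexp : (expand ℤ 2) (X ^ 2 + X + 1 : ℤ[X]) = X ^ 4 + X ^ 2 + 1 := by
    simp [map_add, expand_X]; ring
  rw [hexp] at h
  have hne : (X ^ 2 + X + 1 : ℤ[X]) ≠ 0 := by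
    intro hc
    have := congrArg (fun p => p.coeff 0) hc
    simp at this
  apply mul_right_cancel₀ hne
  rw [← h]; ring

lemma cyclotomic_12_int : cyclotomic 12 ℤ = X ^ 4 - X ^ 2 + 1 := by
  have h := cyclotomic_expand_eq_cyclotomic (p := 2) (n := 6) Nat.prime_two
    (by norm_num) ℤ
  rw [cyclotomic_6_int] at h
  have : (12 : ℕ) = 6 * 2 := by norm_num
  rw [this, ← h]
  simp [map_add, map_sub, expand_X]; ring

theorem barreto_naehrig_family :
    let t : ℤ[X] := 6 * X ^ 2 + 1
    let r : ℤ[X] := 36 * X ^ 4 + 36 * X ^ 3 + 18 * X ^ 2 + 6 * X + 1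
    let q : ℤ[X] := 36 * X ^ 4 + 36 * X ^ 3 + 24 * X ^ 2 + 6 * X + 1
    r ∣ q + 1 - t ∧ r ∣ (cyclotomic 12 ℤ).comp (t - 1) ∧
      4 * q - t ^ 2 = 3 * (6 * X ^ 2 + 4 * X + 1) ^ 2 := by
  intro t r q
  refine ⟨⟨1, by ring⟩, ⟨36 * X ^ 4 - 36 * X ^ 3 + 18 * X ^ 2 - 6 * X + 1, ?_⟩, by ring⟩
  rw [cyclotomic_12_int]
  simp only [t, sub_comp, add_comp, pow_comp, mul_comp, X_comp, one_comp,
    ofNat_comp]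
  ring
end

section
/- Let t(x) = x + 1, r(x) = x⁶ + x³ + 1, and q(x) = (1/3)(x-1)²(x⁶ + x³ + 1) + x in Q[x]. Then r(x) divides q(x) + 1 - t(x) in Q[x], r(x) divides Φ_9(t(x) - 1), and there exists y(x) ∈ Q[x] such that 4·q(x) = t(x)² + 3·y(x)². -/
open Polynomial

theorem cyclotomic_family_k9 :
    let t : ℚ[X] := X + 1
    let r : ℚ[X] := X ^ 6 + X ^ 3 + 1
    let q : ℚ[X] := C (1 / 3 : ℚ) * (X - 1) ^ 2 * (X ^ 6 + X ^ 3 + 1) + X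
    r ∣ q + 1 - t ∧ r ∣ (cyclotomic 9 ℚ).comp (t - 1) ∧
      ∃ y : ℚ[X], 4 * q = t ^ 2 + 3 * y ^ 2 := by
  intro t r q
  refine ⟨⟨C (1/3 : ℚ) * (X - 1) ^ 2, by simp only [t, r, q]; ring⟩,
    ⟨1, ?_⟩, C (1/3 : ℚ) * (X - 1) * (2 * X ^ 3 + 1), ?_⟩
  · have h9 : cyclotomic 9 ℚ = X ^ 6 + X ^ 3 + 1 := by
      have := cyclotomic_prime_pow_eq_geom_sum (R := ℚ) (p := 3) (n := 1) (by norm_num)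
      norm_num [Finset.sum_range_succ] at this
      linear_combination this
    rw [h9]
    rw [add_sub_cancel_right, comp_X, mul_one]
  · simp only [t, q]
    have h : (3 : ℚ[X]) * C (1/3 : ℚ) = 1 := by
      rw [show (3 : ℚ[X]) = C (3 : ℚ) from (map_ofNat C 3).symm, ← C_mul]; norm_num
    linear_combination (-(X-1)^2*(2*X^3+1)^2 * C (1/3:ℚ) + (X-1)^2 : ℚ[X]) * h
end

section
/- Let p be an odd prime, m ≥ 2 and n ≥ 1 integers, and g an odd integer with gcd(g, 2^m p^n) = 1. Let y₁(x) be the remainder of x^{2^{m-2} p^n + g} - x^{2^{m-2} p^n} upon division by Φ_{2^m p^n}(x) in Q[x]. Then deg y₁(x) ≥ 2^{m-2} p^n. -/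
open Polynomial
set_option maxRecDepth 8000

lemma coeff_comp_neg_X (f : ℚ[X]) (k : ℕ) : (f.comp (-X)).coeff k = (-1)^k * f.coeff k := by
  induction f using Polynomial.induction_on' with
  | add p q hp hq => simp [add_comp, hp, hq, mul_add]
  | monomial a c =>
    have h1 : (-1 : ℚ[X]) ^ a = C ((-1:ℚ)^a) := by simp
    rw [monomial_comp, neg_pow, h1, ← mul_assoc, ← C_mul, coeff_C_mul, coeff_X_pow,
      coeff_monomial]
    by_cases h : k = a
    · subst h; simp; ring
    · simp [h, Ne.symm h]

lemma degree_comp_neg_X_le (f : ℚ[X]) : (f.comp (-X)).degree ≤ f.degree := by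
  rw [degree_le_iff_coeff_zero]
  intro k hk
  rw [coeff_comp_neg_X, coeff_eq_zero_of_degree_lt hk, mul_zero]

theorem deg_y1_ge (p m n g : ℕ) (hp : p.Prime) (hodd : p ≠ 2) (hm : 2 ≤ m) (hn : 1 ≤ n)
    (hgodd : Odd g) (hg : Nat.gcd g (2 ^ m * p ^ n) = 1) :
    2 ^ (m - 2) * p ^ n ≤
      (((X : ℚ[X]) ^ (2 ^ (m - 2) * p ^ n + g) - X ^ (2 ^ (m - 2) * p ^ n)) %ₘ
          cyclotomic (2 ^ m * p ^ n) ℚ).natDegree := by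
  set N := 2 ^ m * p ^ n with hN
  set K := 2 ^ (m - 2) * p ^ n with hKdef
  set Φ : ℚ[X] := cyclotomic N ℚ with hΦdef
  have hΦm : Φ.Monic := cyclotomic.monic N ℚ
  have hppos : 0 < p := hp.pos
  have hcop : Nat.Coprime (2 ^ m) (p ^ n) :=
    Nat.Coprime.pow _ _ ((Nat.coprime_primes Nat.prime_two hp).mpr (Ne.symm hodd))
  have htot : N.totient = 2 ^ (m - 1) * (p ^ (n - 1) * (p - 1)) := by
    rw [hN, Nat.totient_mul hcop, Nat.totient_prime_pow hp hn,
      Nat.totient_prime_pow Nat.prime_two (by omega)]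
    ring_nf
  have hp3 : 3 ≤ p := by
    rcases Nat.lt_or_ge p 3 with h | h
    · interval_cases p <;> simp_all
    · exact h
  have hK_lt : K < N.totient := by
    rw [htot, hKdef]
    have h2 : m - 2 + 1 = m - 1 := by omega
    have hpn : p ^ n = p ^ (n - 1) * p := by
      conv_lhs => rw [show n = (n - 1) + 1 by omega, pow_succ]
    calc 2 ^ (m - 2) * p ^ n = 2 ^ (m - 2) * (p ^ (n - 1) * p) := by rw [hpn]
      _ < 2 ^ (m - 2) * (p ^ (n - 1) * (2 * (p - 1))) := by
          gcongr 2 ^ (m - 2) * (p ^ (n-1) * ?_)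
          omega
      _ = 2 ^ (m - 2 + 1) * (p ^ (n - 1) * (p - 1)) := by ring
      _ = 2 ^ (m - 1) * (p ^ (n - 1) * (p - 1)) := by rw [h2]
  have hΦdeg : Φ.natDegree = N.totient := natDegree_cyclotomic N ℚ
  have hΦdeg' : (K : WithBot ℕ) < Φ.degree := by
    rw [degree_eq_natDegree hΦm.ne_zero, hΦdeg]
    exact_mod_cast hK_lt
  have hXK : (X ^ K : ℚ[X]) %ₘ Φ = X ^ K := by
    rw [modByMonic_eq_self_iff hΦm, degree_X_pow]
    exact hΦdeg'
  have hΦcomp : Φ.comp (-X) = Φ := by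
    have h2div : (2:ℕ) ∣ 2 ^ (m-1) * p ^ n :=
      dvd_mul_of_dvd_left (dvd_pow_self 2 (by omega)) _
    have hexp : expand ℚ 2 (cyclotomic (2^(m-1)*p^n) ℚ) = cyclotomic ((2^(m-1)*p^n) * 2) ℚ :=
      cyclotomic_expand_eq_cyclotomic Nat.prime_two h2div ℚ
    have hNN : (2^(m-1)*p^n) * 2 = N := by
      rw [hN]
      have h2m : 2^(m-1)*2 = 2^m := by
        rw [← pow_succ]; congr 1; omega
      rw [mul_right_comm, h2m]
    rw [hΦdef, ← hNN, ← hexp, expand_eq_comp_X_pow, comp_assoc]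
    congr 1
    simp [pow_comp]
  set r : ℚ[X] := (X : ℚ[X]) ^ (K + g) %ₘ Φ with hr
  set q : ℚ[X] := (X : ℚ[X]) ^ (K + g) /ₘ Φ with hq
  set ε : ℚ := (-1 : ℚ) ^ (K + g) with hε
  have hεsq : ε * ε = 1 := by
    rw [hε, ← pow_add]
    exact Even.neg_one_pow ⟨K + g, rfl⟩
  have heq : r + Φ * q = X ^ (K + g) := modByMonic_add_div _ Φ
  have heq2 : C ε * r.comp (-X) + Φ * (C ε * q.comp (-X)) = X ^ (K + g) := by
    have h := congrArg (fun f : ℚ[X] => C ε * f.comp (-X)) heq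
    simp only [add_comp, mul_comp, hΦcomp, pow_comp, X_comp, mul_add] at h
    rw [mul_left_comm] at h
    convert h using 2
    have h2 : ((-1:ℚ[X]))^(K+g) = C ε := by rw [hε]; simp
    rw [neg_pow, h2, ← mul_assoc, ← C_mul, hεsq, map_one, one_mul]
  have hdlt : (C ε * r.comp (-X)).degree < Φ.degree := by
    calc (C ε * r.comp (-X)).degree ≤ (r.comp (-X)).degree := by
          apply (degree_mul_le _ _).trans
          simp [degree_C (show ε ≠ 0 by rw [hε]; positivity)]
      _ ≤ r.degree := degree_comp_neg_X_le r
      _ < Φ.degree := degree_modByMonic_lt _ hΦm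
  have hrr : r = C ε * r.comp (-X) :=
    ((div_modByMonic_unique (C ε * q.comp (-X)) (C ε * r.comp (-X)) hΦm
      ⟨heq2, hdlt⟩).2).symm ▸ rfl
  have hcoeffK : r.coeff K = 0 := by
    have h := congrArg (fun f : ℚ[X] => f.coeff K) hrr
    simp only [coeff_C_mul, coeff_comp_neg_X] at h
    have hodd2 : Odd (K + g + K) := by
      obtain ⟨t, ht⟩ := hgodd
      exact ⟨K + t, by omega⟩
    have : ε * (-1:ℚ)^K = -1 := by
      rw [hε, ← pow_add]
      exact Odd.neg_one_pow hodd2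
    rw [← mul_assoc, this] at h
    linarith
  have hfinal : (((X : ℚ[X]) ^ (K + g) - X ^ K) %ₘ Φ).coeff K = -1 := by
    rw [sub_modByMonic, hXK, ← hr, coeff_sub, hcoeffK, coeff_X_pow, if_pos rfl]
    norm_num
  exact le_natDegree_of_ne_zero (by rw [hfinal]; norm_num)
end

section
/- Let n ≥ 2 be an integer and g an integer with 1 ≤ g < 3^n and gcd(g, 3) = 1, and let y₁(x) be the remainder of 2x^{3^{n-1}+g} + x^g - 2x^{3^{n-1}} - 1 upon division by r(x) = x^{2·3^{n-1}} + x^{3^{n-1}} + 1 in Q[x]. Then max(deg of the remainder of x^g mod r(x), deg y₁(x)) ≥ 3^{n-1} + 1. -/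
open Polynomial

theorem deg_y1_three_pow (n g : ℕ) (hn : 2 ≤ n) (hg1 : 1 ≤ g) (hg2 : g < 3 ^ n)
    (hg3 : Nat.gcd g 3 = 1) :
    3 ^ (n - 1) + 1 ≤
      max (((X : ℚ[X]) ^ g %ₘ (X ^ (2 * 3 ^ (n - 1)) + X ^ (3 ^ (n - 1)) + 1)).natDegree)
        (((2 * (X : ℚ[X]) ^ (3 ^ (n - 1) + g) + X ^ g - 2 * X ^ (3 ^ (n - 1)) - 1) %ₘ
            (X ^ (2 * 3 ^ (n - 1)) + X ^ (3 ^ (n - 1)) + 1)).natDegree) := by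
  set m := 3 ^ (n - 1) with hm
  have hm3 : 3 ≤ m := by
    have : 3 ^ 1 ≤ 3 ^ (n - 1) := Nat.pow_le_pow_right (by norm_num) (by omega)
    simpa using this
  have hg3m : g < 3 * m := by
    have h3n : 3 ^ n = 3 * m := by
      rw [hm, ← pow_succ']
      congr 1
      omega
    omega
  have h3g : ¬ (3 ∣ g) := by
    intro h
    have h2 : 3 ∣ Nat.gcd g 3 := Nat.dvd_gcd h (dvd_refl 3)
    rw [hg3] at h2
    omega
  have h3m : (3 : ℕ) ∣ m := by
    rw [hm]
    exact dvd_pow_self 3 (by omega)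
  have hgm : g ≠ m := fun h => h3g (h ▸ h3m)
  have hg2m : g ≠ 2 * m := fun h => h3g (h ▸ Dvd.dvd.mul_left h3m 2)
  set r : ℚ[X] := X ^ (2 * m) + X ^ m + 1 with hr
  have hmonic : r.Monic := by
    rw [hr]; monicity!; split_ifs <;> omega
  have hdnr : r.natDegree = 2 * m := by
    rw [hr]; compute_degree! <;> first | omega | (simp; omega)
  have hdegr : r.degree = (2 * m : ℕ) := by
    rw [degree_eq_natDegree hmonic.ne_zero, hdnr]
  rcases lt_trichotomy g m with hlt | heq | hgt
  · -- g < m : use y₁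
    apply le_trans _ (le_max_right _ _)
    set p : ℚ[X] := 2 * X ^ (m + g) + X ^ g - 2 * X ^ m - 1 with hp
    have hdp : p.natDegree = m + g := by
      rw [hp]
      compute_degree!
      split_ifs <;> first | omega | norm_num [Int.subNatNat]
    have hself : p %ₘ r = p := by
      rw [modByMonic_eq_self_iff hmonic, hdegr]
      refine lt_of_le_of_lt degree_le_natDegree ?_
      rw [hdp]
      exact_mod_cast (by omega : m + g < 2 * m)
    rw [hself, hdp]; omega
  · exact absurd heq hgm
  · rcases lt_trichotomy g (2 * m) with hlt2 | heq2 | hgt2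
    · -- m < g < 2m : X^g is its own remainder
      apply le_trans _ (le_max_left _ _)
      have hself : (X : ℚ[X]) ^ g %ₘ r = X ^ g := by
        rw [modByMonic_eq_self_iff hmonic, hdegr, degree_X_pow]
        exact_mod_cast hlt2
      rw [hself, natDegree_X_pow]; omega
    · exact absurd heq2 hg2m
    · -- 2m < g < 3m
      apply le_trans _ (le_max_left _ _)
      set s : ℚ[X] := -X ^ (g - m) - X ^ (g - 2 * m) with hs
      have hds : s.natDegree = g - m := by
        rw [hs]; compute_degree! <;> first | omega | (simp; omega)
      have key : (X : ℚ[X]) ^ g = r * X ^ (g - 2 * m) + s := by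
        rw [hr, hs, add_mul, add_mul, one_mul, ← pow_add, ← pow_add]
        have e2 : 2 * m + (g - 2 * m) = g := by omega
        have e3 : m + (g - 2 * m) = g - m := by omega
        rw [e2, e3]
        ring
      have hmod : (X : ℚ[X]) ^ g %ₘ r = s := by
        rw [key, add_modByMonic, self_mul_modByMonic hmonic, zero_add,
          modByMonic_eq_self_iff hmonic, hdegr]
        refine lt_of_le_of_lt degree_le_natDegree ?_
        rw [hds]
        exact_mod_cast (by omega : g - m < 2 * m)
      rw [hmod, hds]; omega
end
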